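/- Let μ, ν be fixed partitions. If m, n → ∞ with n/m = α > 0 fixed, then h((n^m)) / h((μ + (n^m)) ∪ ν') → (1/(h(μ) h(ν))) · (α+1)^{−|μ|} · (α^{−1}+1)^{−|ν|}, where (μ + (n^m)) ∪ ν' is the partition obtained by adding μ to the m × n rectangle and appending the conjugate of ν below. -/

import Mathlib

open Finset Filter Topology

/-- The product of the hook lengths of a partition with at most `n` parts,
given by the (weakly decreasing) row-length function `l`. -/
def hookProd (n : ℕ) (l : ℕ → ℕ) : ℕ :=
  ∏ i ∈ Finset.range n, ∏ j ∈ Finset.range (l i),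
    (l i - j + ((Finset.Ico (i + 1) n).filter (fun i' => j < l i')).card)

/-- The conjugate (transpose) of a partition of length at most `L`:
`l' j = #{i < L | l i > j}`. -/
def conjPart (L : ℕ) (l : ℕ → ℕ) (j : ℕ) : ℕ :=
  ((Finset.range L).filter (fun i => j < l i)).card

lemma lower_eq_range (s : Finset ℕ) (h : ∀ a ∈ s, ∀ b, b ≤ a → b ∈ s) :
    s = Finset.range s.card := by
  have sub : s ⊆ Finset.range s.card := by
    intro t ht
    rw [mem_range]
    have h1 : Finset.range (t+1) ⊆ s := fun b hb => h t ht b (Nat.lt_succ_iff.1 (mem_range.1 hb))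
    have := Finset.card_le_card h1
    simpa using this
  exact Finset.eq_of_subset_of_card_le sub (by simp)

lemma conj_lt_iff {l : ℕ → ℕ} (hl : Antitone l) {L : ℕ} (hL : ∀ t, L ≤ t → l t = 0)
    (i j : ℕ) : i < conjPart L l j ↔ j < l i := by
  set s := (Finset.range L).filter (fun t => j < l t) with hs
  have hlow : ∀ a ∈ s, ∀ b, b ≤ a → b ∈ s := by
    intro a ha b hb
    rw [hs, mem_filter, mem_range] at ha ⊢
    exact ⟨lt_of_le_of_lt hb ha.1, lt_of_lt_of_le ha.2 (hl hb)⟩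
  have hrange := lower_eq_range s hlow
  constructor
  · intro hi
    have : i ∈ s := by rw [hrange]; exact mem_range.2 hi
    exact (mem_filter.1 this).2
  · intro hj
    have hiL : i < L := by
      by_contra hc
      have := hL i (le_of_not_gt hc)
      omega
    have : i ∈ s := mem_filter.2 ⟨mem_range.2 hiL, hj⟩
    rw [hrange, mem_range] at this
    exact this

lemma conjPart_antitone (L : ℕ) (l : ℕ → ℕ) : Antitone (conjPart L l) := by
  intro a b hab
  apply Finset.card_le_card
  apply Finset.monotone_filter_right
  intro t _ ht
  exact lt_of_le_of_lt hab ht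

lemma conjPart_le (L : ℕ) (l : ℕ → ℕ) (j : ℕ) : conjPart L l j ≤ L :=
  le_trans (Finset.card_filter_le _ _) (by simp)

lemma conjPart_support {l : ℕ → ℕ} (hl : Antitone l) (L j : ℕ) (hj : l 0 ≤ j) :
    conjPart L l j = 0 := by
  unfold conjPart
  rw [Finset.card_eq_zero, Finset.filter_eq_empty_iff]
  intro t _
  have := hl (Nat.zero_le t)
  omega

lemma conjPart_conjPart {l : ℕ → ℕ} (hl : Antitone l) {L : ℕ} (hL : ∀ t, L ≤ t → l t = 0)
    (j : ℕ) : conjPart (l 0) (conjPart L l) j = l j := by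
  have : (Finset.range (l 0)).filter (fun k => j < conjPart L l k)
      = Finset.range (l j) := by
    ext k
    simp only [mem_filter, mem_range]
    rw [show (j < conjPart L l k) ↔ (k < l j) from by
      rw [conj_lt_iff hl hL j k]]
    constructor
    · rintro ⟨_, h2⟩; exact h2
    · intro h; exact ⟨lt_of_lt_of_le h (hl (Nat.zero_le j)), h⟩
  show ((Finset.range (l 0)).filter (fun k => j < conjPart L l k)).card = l j
  rw [this, Finset.card_range]

lemma leg_eq {l : ℕ → ℕ} (hl : Antitone l) {N : ℕ} (hN : ∀ t, N ≤ t → l t = 0)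
    {i j : ℕ} (hij : j < l i) :
    ((Finset.Ico (i+1) N).filter (fun t => j < l t)).card = conjPart N l j - (i+1) := by
  have hfil : (Finset.Ico (i+1) N).filter (fun t => j < l t)
      = Finset.Ico (i+1) (conjPart N l j) := by
    ext t
    simp only [mem_filter, mem_Ico]
    rw [show (j < l t) ↔ (t < conjPart N l j) from (conj_lt_iff hl hN t j).symm]
    have hle := conjPart_le N l j
    constructor
    · rintro ⟨⟨h1, _⟩, h2⟩; exact ⟨h1, h2⟩
    · rintro ⟨h1, h2⟩; exact ⟨⟨h1, lt_of_lt_of_le h2 hle⟩, h2⟩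
  rw [hfil, Nat.card_Ico]

lemma hookProd_eq {l : ℕ → ℕ} (hl : Antitone l) {N : ℕ} (hN : ∀ t, N ≤ t → l t = 0) :
    hookProd N l = ∏ i ∈ Finset.range N, ∏ j ∈ Finset.range (l i),
      (l i - j + (conjPart N l j - (i+1))) := by
  unfold hookProd
  refine Finset.prod_congr rfl fun i _ => Finset.prod_congr rfl fun j hj => ?_
  rw [leg_eq hl hN (mem_range.1 hj)]

lemma hookProd_pos (N : ℕ) (l : ℕ → ℕ) : 0 < hookProd N l := by
  unfold hookProd
  refine Finset.prod_pos fun i _ => Finset.prod_pos fun j hj => ?_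
  have := mem_range.1 hj
  omega

lemma hookProd_ext {l : ℕ → ℕ} {L N : ℕ} (hLN : L ≤ N) (hL : ∀ t, L ≤ t → l t = 0) :
    hookProd N l = hookProd L l := by
  unfold hookProd
  rw [← Finset.prod_subset (Finset.range_subset_range.2 hLN) (fun i _ hi => by
    rw [hL i (by simpa using hi)]; simp)]
  refine Finset.prod_congr rfl fun i hi => Finset.prod_congr rfl fun j hj => ?_
  congr 1
  congr 1
  have : (Finset.Ico (i+1) N).filter (fun t => j < l t)
      = (Finset.Ico (i+1) L).filter (fun t => j < l t) := by
    ext t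
    simp only [mem_filter, mem_Ico]
    constructor
    · rintro ⟨⟨h1, _⟩, h2⟩
      refine ⟨⟨h1, ?_⟩, h2⟩
      by_contra hc
      have := hL t (le_of_not_gt hc)
      omega
    · rintro ⟨⟨h1, h2⟩, h3⟩
      exact ⟨⟨h1, lt_of_lt_of_le h2 hLN⟩, h3⟩
  rw [this]

lemma hookProd_conj {l : ℕ → ℕ} (hl : Antitone l) {L : ℕ} (hL : ∀ t, L ≤ t → l t = 0) :
    hookProd (l 0) (conjPart L l) = hookProd L l := by
  have hl' : Antitone (conjPart L l) := conjPart_antitone L l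
  have hL' : ∀ t, l 0 ≤ t → conjPart L l t = 0 := fun t ht => conjPart_support hl L t ht
  rw [hookProd_eq hl' hL', hookProd_eq hl hL]
  rw [Finset.prod_sigma' (Finset.range (l 0)) (fun i => Finset.range (conjPart L l i))
    (fun i j => (conjPart L l i - j + (conjPart (l 0) (conjPart L l) j - (i+1)))),
    Finset.prod_sigma' (Finset.range L) (fun i => Finset.range (l i))
    (fun i j => (l i - j + (conjPart L l j - (i+1))))]
  refine Finset.prod_nbij' (fun p => ⟨p.2, p.1⟩) (fun p => ⟨p.2, p.1⟩) ?_ ?_ ?_ ?_ ?_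
  · rintro ⟨i, j⟩ hp
    simp only [Finset.mem_sigma, mem_range] at hp ⊢
    obtain ⟨h1, h2⟩ := hp
    constructor
    · -- j < L : since j < conjPart L l i, element of filter (range L)
      have : i < l j := (conj_lt_iff hl hL j i).1 h2
      by_contra hc
      have := hL j (le_of_not_gt hc)
      omega
    · exact (conj_lt_iff hl hL j i).1 h2
  · rintro ⟨i, j⟩ hp
    simp only [Finset.mem_sigma, mem_range] at hp ⊢
    obtain ⟨h1, h2⟩ := hp
    constructor
    · calc j < l i := h2
        _ ≤ l 0 := hl (Nat.zero_le i)
    · exact (conj_lt_iff hl hL i j).2 h2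
  · rintro ⟨i, j⟩ _; rfl
  · rintro ⟨i, j⟩ _; rfl
  · rintro ⟨i, j⟩ hp
    simp only [Finset.mem_sigma, mem_range] at hp
    obtain ⟨h1, h2⟩ := hp
    have h3 : i < l j := (conj_lt_iff hl hL j i).1 h2
    simp only
    rw [conjPart_conjPart hl hL j]
    omega

lemma rect_hookProd (m n : ℕ) :
    hookProd m (fun i => if i < m then n else 0)
      = ∏ i ∈ Finset.range m, ∏ j ∈ Finset.range n, ((m - 1 - i) + (n - j)) := by
  unfold hookProd
  refine Finset.prod_congr rfl fun i hi => ?_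
  have him : i < m := mem_range.1 hi
  simp only [him, if_pos]
  refine Finset.prod_congr rfl fun j hj => ?_
  have hjn : j < n := mem_range.1 hj
  have : (Finset.Ico (i+1) m).filter (fun i' => j < if i' < m then n else 0)
      = Finset.Ico (i+1) m := by
    rw [Finset.filter_eq_self]
    intro t ht
    rw [if_pos (mem_Ico.1 ht).2]
    exact hjn
  rw [this, Nat.card_Ico]
  omega

section main
variable {Lμ Lν : ℕ} {μ ν : ℕ → ℕ}

lemma shift_card (m a b : ℕ) (p : ℕ → Prop) [DecidablePred p] (hma : m ≤ a) :
    ((Finset.Ico a b).filter (fun t => p (t - m))).card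
      = ((Finset.Ico (a - m) (b - m)).filter p).card := by
  apply Finset.card_nbij' (fun t => t - m) (fun t => m + t)
  · intro t ht
    simp only [Finset.mem_coe, mem_filter, mem_Ico] at ht ⊢
    exact ⟨⟨by omega, by omega⟩, ht.2⟩
  · intro t ht
    simp only [Finset.mem_coe, mem_filter, mem_Ico] at ht ⊢
    refine ⟨⟨by omega, by omega⟩, ?_⟩
    rw [show m + t - m = t from by omega]
    exact ht.2
  · intro t ht
    simp only [Finset.mem_coe, mem_filter, mem_Ico] at ht ⊢
    omega
  · intro t ht
    simp only [Finset.mem_coe, mem_filter, mem_Ico] at ht ⊢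
    omega

lemma big_hookProd (hμ : Antitone μ) (hμlen : ∀ i, Lμ ≤ i → μ i = 0)
    (hν : Antitone ν) (hνlen : ∀ i, Lν ≤ i → ν i = 0)
    (m n : ℕ) (hmLμ : Lμ ≤ m) (hnLν : Lν ≤ n) :
    hookProd (m + ν 0) (fun i => if i < m then n + μ i else conjPart Lν ν (i - m))
      = hookProd Lμ μ * hookProd Lν ν *
          ∏ i ∈ Finset.range m, ∏ j ∈ Finset.range n, ((m - 1 - i) + (n - j) + μ i + ν j) := by
  set lam : ℕ → ℕ := fun i => if i < m then n + μ i else conjPart Lν ν (i - m) with hlam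
  have conjle : ∀ k, conjPart Lν ν k ≤ Lν := fun k => conjPart_le Lν ν k
  have expand : hookProd (m + ν 0) lam = ∏ i ∈ Finset.range (m + ν 0),
      ∏ j ∈ Finset.range (lam i),
        (lam i - j + ((Finset.Ico (i+1) (m + ν 0)).filter (fun t => j < lam t)).card) := rfl
  rw [expand, Finset.prod_range_add]
  -- Part 2 : the ν' rows
  have part2 : (∏ k ∈ Finset.range (ν 0), ∏ j ∈ Finset.range (lam (m + k)),
      (lam (m+k) - j +
        ((Finset.Ico (m+k+1) (m + ν 0)).filter (fun t => j < lam t)).card))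
      = hookProd Lν ν := by
    rw [← hookProd_conj hν hνlen]
    unfold hookProd
    refine Finset.prod_congr rfl fun k hk => ?_
    have hlamk : lam (m + k) = conjPart Lν ν k := by
      simp only [hlam]
      rw [if_neg (by omega)]
      congr 1
      omega
    rw [hlamk]
    refine Finset.prod_congr rfl fun j hj => ?_
    congr 1
    have hjLν : j < Lν := lt_of_lt_of_le (mem_range.1 hj) (conjle k)
    have hfil : ((Finset.Ico (m+k+1) (m + ν 0)).filter (fun t => j < lam t))
        = ((Finset.Ico (m+k+1) (m + ν 0)).filter (fun t => j < conjPart Lν ν (t - m))) := by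
      apply Finset.filter_congr
      intro t ht
      have : ¬ (t < m) := by have := (mem_Ico.1 ht).1; omega
      simp only [hlam, if_neg this]
    rw [hfil, shift_card m _ _ (fun s => j < conjPart Lν ν s) (by omega)]
    have hIco : Finset.Ico (m+k+1-m) (m + ν 0 - m) = Finset.Ico (k+1) (ν 0) := by
      congr 1 <;> omega
    rw [hIco]
  rw [part2]
  -- Part 1 : the first m rows
  have part1 : (∏ i ∈ Finset.range m, ∏ j ∈ Finset.range (lam i),
      (lam i - j + ((Finset.Ico (i+1) (m + ν 0)).filter (fun t => j < lam t)).card))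
      = (∏ i ∈ Finset.range m, ∏ j ∈ Finset.range n, ((m - 1 - i) + (n - j) + μ i + ν j))
        * hookProd Lμ μ := by
    rw [show hookProd Lμ μ = hookProd m μ from (hookProd_ext hmLμ hμlen).symm]
    unfold hookProd
    rw [← Finset.prod_mul_distrib]
    refine Finset.prod_congr rfl fun i hi => ?_
    have him : i < m := mem_range.1 hi
    have hlami : lam i = n + μ i := by simp only [hlam, if_pos him]
    rw [hlami, Finset.prod_range_add]
    congr 1
    · -- columns j < n
      refine Finset.prod_congr rfl fun j hj => ?_
      have hjn : j < n := mem_range.1 hj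
      -- split the leg count
      have hsplit : Finset.Ico (i+1) (m + ν 0) = Finset.Ico (i+1) m ∪ Finset.Ico m (m + ν 0) :=
        (Finset.Ico_union_Ico_eq_Ico (by omega) (by omega)).symm
      have hdisj : Disjoint ((Finset.Ico (i+1) m).filter (fun t => j < lam t))
          ((Finset.Ico m (m + ν 0)).filter (fun t => j < lam t)) := by
        apply Finset.disjoint_filter_filter
        simp only [Finset.disjoint_left, mem_Ico]
        intro t ht1 ht2
        omega
      rw [hsplit, Finset.filter_union, Finset.card_union_of_disjoint hdisj]
      have hc1 : ((Finset.Ico (i+1) m).filter (fun t => j < lam t)) = Finset.Ico (i+1) m := by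
        rw [Finset.filter_eq_self]
        intro t ht
        have htm : t < m := (mem_Ico.1 ht).2
        simp only [hlam, if_pos htm]
        omega
      have hc2 : ((Finset.Ico m (m + ν 0)).filter (fun t => j < lam t)).card = ν j := by
        have hfil : ((Finset.Ico m (m + ν 0)).filter (fun t => j < lam t))
            = ((Finset.Ico m (m + ν 0)).filter (fun t => j < conjPart Lν ν (t - m))) := by
          apply Finset.filter_congr
          intro t ht
          have : ¬ (t < m) := by have := (mem_Ico.1 ht).1; omega
          simp only [hlam, if_neg this]
        rw [hfil, shift_card m _ _ (fun s => j < conjPart Lν ν s) le_rfl]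
        have : (Finset.Ico (m - m) (m + ν 0 - m)) = Finset.range (ν 0) := by
          rw [show m - m = 0 from by omega, show m + ν 0 - m = ν 0 from by omega]
          rw [Nat.Ico_zero_eq_range]
        rw [this]
        exact conjPart_conjPart hν hνlen j
      rw [hc1, hc2, Nat.card_Ico]
      have hνjn : ν j ≤ ν 0 := hν (Nat.zero_le j)
      omega
    · -- columns n ≤ j < n + μ i : the μ hooks
      refine Finset.prod_congr rfl fun t ht => ?_
      have htμ : t < μ i := mem_range.1 ht
      have hμi : 0 < μ i := by omega
      have hiLμ : i < Lμ := by
        by_contra hc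
        have := hμlen i (le_of_not_gt hc)
        omega
      have hfil : ((Finset.Ico (i+1) (m + ν 0)).filter (fun s => n + t < lam s))
          = ((Finset.Ico (i+1) m).filter (fun s => t < μ s)) := by
        ext s
        simp only [mem_filter, mem_Ico]
        constructor
        · rintro ⟨⟨h1, h2⟩, h3⟩
          by_cases hsm : s < m
          · simp only [hlam, if_pos hsm] at h3
            exact ⟨⟨h1, hsm⟩, by omega⟩
          · simp only [hlam, if_neg hsm] at h3
            have := conjle (s - m)
            omega
        · rintro ⟨⟨h1, h2⟩, h3⟩
          refine ⟨⟨h1, by omega⟩, ?_⟩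
          simp only [hlam, if_pos h2]
          omega
      rw [hfil]
      omega
  rw [part1]
  ring
end main

lemma nat_shift_prod (a n k : ℕ) :
    (∏ j ∈ Finset.range n, (a+j)) * ∏ s ∈ Finset.range k, (a+n+s)
      = (∏ j ∈ Finset.range n, (a+k+j)) * ∏ s ∈ Finset.range k, (a+s) := by
  have h1 : (∏ j ∈ Finset.range (n+k), (a+j))
      = (∏ j ∈ Finset.range n, (a+j)) * ∏ s ∈ Finset.range k, (a+n+s) := by
    rw [Finset.prod_range_add]
    congr 1
    exact Finset.prod_congr rfl fun s _ => by omega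
  have h2 : (∏ j ∈ Finset.range (n+k), (a+j))
      = (∏ s ∈ Finset.range k, (a+s)) * ∏ j ∈ Finset.range n, (a+k+j) := by
    rw [add_comm n k, Finset.prod_range_add]
    congr 1
    exact Finset.prod_congr rfl fun s _ => by omega
  rw [← h1, h2]
  ring

lemma prod_pos_ne (a : ℕ → ℕ) (s : Finset ℕ) (h : ∀ t ∈ s, 0 < a t) :
    ((∏ t ∈ s, a t : ℕ) : ℝ) ≠ 0 := by
  rw [Nat.cast_ne_zero]
  exact (Finset.prod_pos h).ne'

lemma telescope (Mv k n : ℕ) :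
    ∏ j ∈ Finset.range n, (((Mv + (n - j) : ℕ) : ℝ) / ((Mv + (n - j) + k : ℕ) : ℝ))
      = ∏ s ∈ Finset.range k, (((Mv + 1 + s : ℕ) : ℝ) / ((Mv + 1 + n + s : ℕ) : ℝ)) := by
  set a := Mv + 1 with ha
  rw [Finset.prod_div_distrib, Finset.prod_div_distrib]
  have hnum : ∏ j ∈ Finset.range n, ((Mv + (n - j) : ℕ) : ℝ)
      = ∏ j ∈ Finset.range n, ((a + j : ℕ) : ℝ) := by
    rw [← Finset.prod_range_reflect (fun j => ((a + j : ℕ) : ℝ)) n]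
    refine Finset.prod_congr rfl fun j hj => ?_
    have := mem_range.1 hj
    congr 1
    omega
  have hden : ∏ j ∈ Finset.range n, ((Mv + (n - j) + k : ℕ) : ℝ)
      = ∏ j ∈ Finset.range n, ((a + k + j : ℕ) : ℝ) := by
    rw [← Finset.prod_range_reflect (fun j => ((a + k + j : ℕ) : ℝ)) n]
    refine Finset.prod_congr rfl fun j hj => ?_
    have := mem_range.1 hj
    congr 1
    omega
  rw [hnum, hden]
  rw [← Nat.cast_prod, ← Nat.cast_prod, ← Nat.cast_prod, ← Nat.cast_prod]
  rw [div_eq_div_iff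
    (prod_pos_ne _ _ (fun t _ => by omega)) (prod_pos_ne _ _ (fun t _ => by omega))]
  rw [← Nat.cast_mul, ← Nat.cast_mul]
  norm_cast
  rw [nat_shift_prod a n k]
  ring

lemma prodA (M N K : ℕ) (k : ℕ → ℕ) (hK : K ≤ M) (hklen : ∀ i, K ≤ i → k i = 0) :
    ∏ i ∈ Finset.range M, ∏ j ∈ Finset.range N,
        ((((M-1-i)+(N-j) : ℕ) : ℝ) / (((M-1-i)+(N-j)+ k i : ℕ) : ℝ))
      = ∏ i ∈ Finset.range K, ∏ s ∈ Finset.range (k i),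
          (((M:ℝ) - i + s) / ((M:ℝ) + N - i + s)) := by
  rw [← Finset.prod_subset (Finset.range_subset_range.2 hK) (fun i _ hi =>
    Finset.prod_eq_one fun j hj => by
      have hjN := mem_range.1 hj
      rw [hklen i (by simpa using hi), Nat.add_zero]
      exact div_self (Nat.cast_ne_zero.2 (by omega)))]
  refine Finset.prod_congr rfl fun i hi => ?_
  have hiM : i < M := lt_of_lt_of_le (mem_range.1 hi) hK
  rw [telescope (M - 1 - i) (k i) N]
  refine Finset.prod_congr rfl fun s _ => ?_
  rw [show (M - 1 - i + 1 + s : ℕ) = (M - i) + s from by omega,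
    show (M - 1 - i + 1 + N + s : ℕ) = (M - i) + (N + s) from by omega]
  push_cast [Nat.cast_sub hiM.le]
  ring

lemma corr_one {c k l : ℕ} (hc : 0 < c) (hk : k = 0 ∨ l = 0) :
    ((c + k : ℕ) : ℝ) * ((c + l : ℕ) : ℝ) / (((c : ℕ) : ℝ) * ((c + k + l : ℕ) : ℝ)) = 1 := by
  have h1 : ((c:ℕ):ℝ) ≠ 0 := by positivity
  rcases hk with h | h <;> subst h <;>
    · rw [div_eq_one_iff_eq (by positivity)]
      push_cast
      ring

lemma cast_c0 (m n i j : ℕ) (hi : i < m) (hj : j < n) :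
    (((m-1-i)+(n-j) : ℕ) : ℝ) = (m:ℝ)+n-1-i-j := by
  rw [show (m-1-i)+(n-j) = (m+n) - (1+i+j) from by omega, Nat.cast_sub (by omega)]
  push_cast; ring

lemma cast_c1 (m n i j x : ℕ) (hi : i < m) (hj : j < n) :
    (((m-1-i)+(n-j)+x : ℕ) : ℝ) = (m:ℝ)+n-1-i-j+x := by
  rw [show (m-1-i)+(n-j)+x = (m+n+x) - (1+i+j) from by omega, Nat.cast_sub (by omega)]
  push_cast; ring

lemma cast_c2 (m n i j x y : ℕ) (hi : i < m) (hj : j < n) :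
    (((m-1-i)+(n-j)+x+y : ℕ) : ℝ) = (m:ℝ)+n-1-i-j+x+y := by
  rw [show (m-1-i)+(n-j)+x+y = (m+n+x+y) - (1+i+j) from by omega, Nat.cast_sub (by omega)]
  push_cast; ring

section main2
variable {Lμ Lν : ℕ} {μ ν : ℕ → ℕ}

lemma factor_helper (X a b : ℝ) (h0 : X ≠ 0) (h1 : X + a ≠ 0) (h2 : X + b ≠ 0)
    (h3 : X + a + b ≠ 0) :
    X / (X + a + b) = (X/(X+a)) * (X/(X+b)) * (((X+a)*(X+b))/(X*(X+a+b))) := by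
  field_simp

set_option maxHeartbeats 1000000 in
lemma ratio_eq (hμ : Antitone μ) (hμlen : ∀ i, Lμ ≤ i → μ i = 0)
    (hν : Antitone ν) (hνlen : ∀ i, Lν ≤ i → ν i = 0)
    (m n : ℕ) (hmLμ : Lμ ≤ m) (hnLν : Lν ≤ n) :
    (hookProd m (fun i => if i < m then n else 0) : ℝ) /
      (hookProd (m + ν 0) (fun i => if i < m then n + μ i else conjPart Lν ν (i - m)) : ℝ)
    = (1 / ((hookProd Lμ μ : ℝ) * (hookProd Lν ν : ℝ)))
      * (∏ i ∈ Finset.range Lμ, ∏ s ∈ Finset.range (μ i),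
          (((m:ℝ) - i + s)/((m:ℝ) + n - i + s)))
      * (∏ j ∈ Finset.range Lν, ∏ s ∈ Finset.range (ν j),
          (((n:ℝ) - j + s)/((n:ℝ) + m - j + s)))
      * (∏ i ∈ Finset.range Lμ, ∏ j ∈ Finset.range Lν,
          ((((m:ℝ)+n-1-i-j+μ i)*((m:ℝ)+n-1-i-j+ν j)) /
            (((m:ℝ)+n-1-i-j)*((m:ℝ)+n-1-i-j+μ i+ν j)))) := by
  have hbterm : ∀ i ∈ Finset.range m, ∀ j ∈ Finset.range n,
      (((m-1-i)+(n-j)+μ i+ν j : ℕ) : ℝ) ≠ 0 := fun i hi j hj =>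
    Nat.cast_ne_zero.2 (by have := mem_range.1 hj; omega)
  -- pointwise factorization
  have hfact : ∀ i ∈ Finset.range m, ∀ j ∈ Finset.range n,
      ((((m-1-i)+(n-j) : ℕ) : ℝ) / (((m-1-i)+(n-j)+μ i+ν j : ℕ) : ℝ))
      = ((((m-1-i)+(n-j) : ℕ) : ℝ) / (((m-1-i)+(n-j)+μ i : ℕ) : ℝ))
        * ((((m-1-i)+(n-j) : ℕ) : ℝ) / (((m-1-i)+(n-j)+ν j : ℕ) : ℝ))
        * (((((m-1-i)+(n-j)+μ i : ℕ) : ℝ) * (((m-1-i)+(n-j)+ν j : ℕ) : ℝ)) /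
            ((((m-1-i)+(n-j) : ℕ) : ℝ) * (((m-1-i)+(n-j)+μ i+ν j : ℕ) : ℝ))) := by
    intro i hi j hj
    have hjn := mem_range.1 hj
    have h0 : (((m-1-i)+(n-j) : ℕ) : ℝ) ≠ 0 := Nat.cast_ne_zero.2 (by omega)
    have h1 : (((m-1-i)+(n-j)+μ i : ℕ) : ℝ) ≠ 0 := Nat.cast_ne_zero.2 (by omega)
    have h2 : (((m-1-i)+(n-j)+ν j : ℕ) : ℝ) ≠ 0 := Nat.cast_ne_zero.2 (by omega)
    have h3 : (((m-1-i)+(n-j)+μ i+ν j : ℕ) : ℝ) ≠ 0 := hbterm i hi j hj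
    have e1 : (((m-1-i)+(n-j)+μ i : ℕ) : ℝ) = (((m-1-i)+(n-j) : ℕ) : ℝ) + μ i := by
      push_cast; ring
    have e2 : (((m-1-i)+(n-j)+ν j : ℕ) : ℝ) = (((m-1-i)+(n-j) : ℕ) : ℝ) + ν j := by
      push_cast; ring
    have e3 : (((m-1-i)+(n-j)+μ i+ν j : ℕ) : ℝ)
        = (((m-1-i)+(n-j) : ℕ) : ℝ) + μ i + ν j := by
      push_cast; ring
    rw [e1] at h1
    rw [e2] at h2
    rw [e3] at h3
    rw [e1, e2, e3]
    exact factor_helper _ _ _ h0 h1 h2 h3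
  have key : (∏ i ∈ Finset.range m, ∏ j ∈ Finset.range n,
      ((((m-1-i)+(n-j) : ℕ) : ℝ) / (((m-1-i)+(n-j)+μ i+ν j : ℕ) : ℝ)))
      = (∏ i ∈ Finset.range Lμ, ∏ s ∈ Finset.range (μ i),
          (((m:ℝ) - i + s)/((m:ℝ) + n - i + s)))
        * (∏ j ∈ Finset.range Lν, ∏ s ∈ Finset.range (ν j),
          (((n:ℝ) - j + s)/((n:ℝ) + m - j + s)))
        * (∏ i ∈ Finset.range Lμ, ∏ j ∈ Finset.range Lν,
          ((((m:ℝ)+n-1-i-j+μ i)*((m:ℝ)+n-1-i-j+ν j)) /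
            (((m:ℝ)+n-1-i-j)*((m:ℝ)+n-1-i-j+μ i+ν j)))) := by
    rw [Finset.prod_congr rfl (fun i hi => Finset.prod_congr rfl fun j hj => hfact i hi j hj)]
    rw [Finset.prod_congr rfl (fun (i : ℕ) (hi : i ∈ Finset.range m) =>
      (Finset.prod_mul_distrib : ∏ j ∈ Finset.range n, _ = _)),
      Finset.prod_mul_distrib]
    rw [Finset.prod_congr rfl (fun (i : ℕ) (hi : i ∈ Finset.range m) =>
      (Finset.prod_mul_distrib : ∏ j ∈ Finset.range n, _ = _)),
      Finset.prod_mul_distrib]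
    congr 1
    congr 1
    · -- A
      exact prodA m n Lμ μ hmLμ hμlen
    · -- B
      rw [Finset.prod_comm]
      rw [Finset.prod_congr rfl (fun j hj => Finset.prod_congr rfl fun i hi => by
        rw [show (m-1-i)+(n-j) = (n-1-j)+(m-i) from by
          have := mem_range.1 hi; have := mem_range.1 hj; omega])]
      exact prodA n m Lν ν hnLν hνlen
    · -- C
      rw [← Finset.prod_subset (Finset.range_subset_range.2 hmLμ) (fun i hi hni =>
        Finset.prod_eq_one fun j hj => by
          have hjn := mem_range.1 hj
          rw [hμlen i (by simpa using hni)]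
          exact corr_one (by omega) (Or.inl rfl))]
      refine Finset.prod_congr rfl fun i hi => ?_
      have him : i < m := lt_of_lt_of_le (mem_range.1 hi) hmLμ
      rw [← Finset.prod_subset (Finset.range_subset_range.2 hnLν) (fun j hj hnj => by
          have hjn := mem_range.1 hj
          rw [hνlen j (by simpa using hnj)]
          exact corr_one (by omega) (Or.inr rfl))]
      refine Finset.prod_congr rfl fun j hj => ?_
      have hjn : j < n := lt_of_lt_of_le (mem_range.1 hj) hnLν
      rw [cast_c0 m n i j him hjn, cast_c1 m n i j (μ i) him hjn,
        cast_c1 m n i j (ν j) him hjn, cast_c2 m n i j (μ i) (ν j) him hjn]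
  rw [rect_hookProd, big_hookProd hμ hμlen hν hνlen m n hmLμ hnLν]
  simp only [Nat.cast_mul, Nat.cast_prod]
  rw [show ∀ (H1 H2 X Y : ℝ), X / (H1 * H2 * Y) = 1/(H1*H2) * (X/Y) from
    fun H1 H2 X Y => by rw [div_mul_div_comm, one_mul]]
  simp only [← Finset.prod_div_distrib]
  rw [key]
  ring
end main2

section limits
variable {m n : ℕ → ℕ} {α : ℝ}

lemma hNR_aux (hα : 0 < α) (hm : Tendsto m atTop atTop)
    (hr : Tendsto (fun t => (n t : ℝ) / (m t : ℝ)) atTop (𝓝 α)) :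
    Tendsto (fun t => (n t : ℝ)) atTop atTop := by
  have hMR : Tendsto (fun t => (m t : ℝ)) atTop atTop :=
    tendsto_natCast_atTop_atTop.comp hm
  have h := Tendsto.pos_mul_atTop hα hr hMR
  refine h.congr' ?_
  filter_upwards [hMR.eventually_ge_atTop 1] with t ht
  have hM0 : (m t : ℝ) ≠ 0 := by linarith
  field_simp

lemma lim_one (f : ℕ → ℝ) (hf : Tendsto f atTop atTop) (a b : ℝ) :
    Tendsto (fun t => (f t + a)/(f t + b)) atTop (𝓝 1) := by
  have hfinv : Tendsto (fun t => (f t)⁻¹) atTop (𝓝 0) := by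
    exact hf.inv_tendsto_atTop
  have ha : Tendsto (fun t => a * (f t)⁻¹) atTop (𝓝 (a * 0)) := hfinv.const_mul a
  have hb : Tendsto (fun t => b * (f t)⁻¹) atTop (𝓝 (b * 0)) := hfinv.const_mul b
  rw [mul_zero] at ha hb
  have hnum : Tendsto (fun t => 1 + a * (f t)⁻¹) atTop (𝓝 (1 + 0)) :=
    (tendsto_const_nhds (x := (1:ℝ))).add ha
  have hden : Tendsto (fun t => 1 + b * (f t)⁻¹) atTop (𝓝 (1 + 0)) :=
    (tendsto_const_nhds (x := (1:ℝ))).add hb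
  rw [add_zero] at hnum hden
  have hdiv := hnum.div hden one_ne_zero
  rw [show (1:ℝ)/1 = 1 from by norm_num] at hdiv
  refine hdiv.congr' ?_
  filter_upwards [hf.eventually_ge_atTop 1] with t ht
  have h0 : f t ≠ 0 := by linarith
  have e1 : 1 + a * (f t)⁻¹ = (f t + a) * (f t)⁻¹ := by field_simp <;> ring
  have e2 : 1 + b * (f t)⁻¹ = (f t + b) * (f t)⁻¹ := by field_simp <;> ring
  simp only [Pi.div_apply]
  rw [e1, e2, mul_div_mul_right _ _ (inv_ne_zero h0)]

lemma lim_frac (hα : 0 < α) (hm : Tendsto m atTop atTop)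
    (hr : Tendsto (fun t => (n t : ℝ) / (m t : ℝ)) atTop (𝓝 α)) (c : ℝ) :
    Tendsto (fun t => ((m t : ℝ) + c)/((m t : ℝ) + (n t : ℝ) + c)) atTop (𝓝 ((α+1)⁻¹)) := by
  have hMR : Tendsto (fun t => (m t : ℝ)) atTop atTop :=
    tendsto_natCast_atTop_atTop.comp hm
  have hMinv : Tendsto (fun t => ((m t : ℝ))⁻¹) atTop (𝓝 0) := by
    exact hMR.inv_tendsto_atTop
  have hc : Tendsto (fun t => c * ((m t:ℝ))⁻¹) atTop (𝓝 (c * 0)) := hMinv.const_mul c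
  rw [mul_zero] at hc
  have hnum : Tendsto (fun t => 1 + c * ((m t:ℝ))⁻¹) atTop (𝓝 (1 + 0)) :=
    (tendsto_const_nhds (x := (1:ℝ))).add hc
  rw [add_zero] at hnum
  have hden : Tendsto (fun t => 1 + ((n t : ℝ)/(m t : ℝ) + c * ((m t : ℝ))⁻¹)) atTop
      (𝓝 (1 + (α + 0))) := (tendsto_const_nhds (x := (1:ℝ))).add (hr.add hc)
  rw [show (1 : ℝ) + (α + 0) = 1 + α from by ring] at hden
  have hne : (1 : ℝ) + α ≠ 0 := by positivity
  have hdiv := hnum.div hden hne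
  rw [show (1:ℝ)/(1+α) = (α+1)⁻¹ from by rw [one_div, add_comm]] at hdiv
  refine hdiv.congr' ?_
  filter_upwards [hMR.eventually_ge_atTop 1] with t ht
  have h0 : (m t : ℝ) ≠ 0 := by linarith
  have e1 : 1 + c * ((m t:ℝ))⁻¹ = ((m t:ℝ) + c) * ((m t:ℝ))⁻¹ := by field_simp <;> ring
  have e2 : 1 + ((n t:ℝ)/(m t:ℝ) + c * ((m t:ℝ))⁻¹)
      = ((m t:ℝ) + (n t:ℝ) + c) * ((m t:ℝ))⁻¹ := by field_simp <;> ring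
  simp only [Pi.div_apply]
  rw [e1, e2, mul_div_mul_right _ _ (inv_ne_zero h0)]

lemma lim_frac2 (hα : 0 < α) (hm : Tendsto m atTop atTop)
    (hr : Tendsto (fun t => (n t : ℝ) / (m t : ℝ)) atTop (𝓝 α)) (c : ℝ) :
    Tendsto (fun t => ((n t : ℝ) + c)/((n t : ℝ) + (m t : ℝ) + c)) atTop
      (𝓝 ((α⁻¹+1)⁻¹)) := by
  have hMR : Tendsto (fun t => (m t : ℝ)) atTop atTop :=
    tendsto_natCast_atTop_atTop.comp hm
  have hMinv : Tendsto (fun t => ((m t : ℝ))⁻¹) atTop (𝓝 0) := by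
    exact hMR.inv_tendsto_atTop
  have hc : Tendsto (fun t => c * ((m t:ℝ))⁻¹) atTop (𝓝 (c * 0)) := hMinv.const_mul c
  rw [mul_zero] at hc
  have hnum : Tendsto (fun t => (n t:ℝ)/(m t:ℝ) + c * ((m t:ℝ))⁻¹) atTop (𝓝 (α + 0)) :=
    hr.add hc
  rw [add_zero] at hnum
  have hden : Tendsto (fun t => (n t:ℝ)/(m t:ℝ) + (1 + c * ((m t:ℝ))⁻¹)) atTop
      (𝓝 (α + (1 + 0))) := hr.add ((tendsto_const_nhds (x := (1:ℝ))).add hc)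
  rw [show α + (1 + 0) = α + 1 from by ring] at hden
  have hne : α + 1 ≠ 0 := by positivity
  have hdiv := hnum.div hden hne
  have hval : α/(α+1) = (α⁻¹+1)⁻¹ := by
    rw [eq_comm, inv_eq_iff_eq_inv, inv_div]
    field_simp
    ring
  rw [hval] at hdiv
  refine hdiv.congr' ?_
  filter_upwards [hMR.eventually_ge_atTop 1] with t ht
  have h0 : (m t : ℝ) ≠ 0 := by linarith
  have e1 : (n t:ℝ)/(m t:ℝ) + c * ((m t:ℝ))⁻¹ = ((n t:ℝ) + c) * ((m t:ℝ))⁻¹ := by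
    field_simp <;> ring
  have e2 : (n t:ℝ)/(m t:ℝ) + (1 + c * ((m t:ℝ))⁻¹)
      = ((n t:ℝ) + (m t:ℝ) + c) * ((m t:ℝ))⁻¹ := by field_simp <;> ring
  simp only [Pi.div_apply]
  rw [e1, e2, mul_div_mul_right _ _ (inv_ne_zero h0)]
end limits

/-- for fixed partitions `μ, ν`, if `m, n → ∞` with `n/m → α > 0`,
then `h((n^m)) / h((μ + (n^m)) ∪ ν') → (1/(h(μ)h(ν))) (α+1)^{-|μ|} (α⁻¹+1)^{-|ν|}`,
where `(μ + (n^m)) ∪ ν'` is the `m × n` rectangle with `μ` added to its rows and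
the conjugate of `ν` appended below. -/
theorem stmt10 (Lμ Lν : ℕ) (μ ν : ℕ → ℕ)
    (hμ : Antitone μ) (hμlen : ∀ i, Lμ ≤ i → μ i = 0)
    (hν : Antitone ν) (hνlen : ∀ i, Lν ≤ i → ν i = 0)
    (α : ℝ) (hα : 0 < α) (m n : ℕ → ℕ)
    (hm : Tendsto m atTop atTop)
    (hratio : Tendsto (fun j => (n j : ℝ) / (m j : ℝ)) atTop (𝓝 α)) :
    Tendsto (fun j =>
        (hookProd (m j) (fun i => if i < m j then n j else 0) : ℝ) /
          (hookProd (m j + ν 0) (fun i =>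
            if i < m j then n j + μ i else conjPart Lν ν (i - m j)) : ℝ))
      atTop
      (𝓝 ((1 / ((hookProd Lμ μ : ℝ) * (hookProd Lν ν : ℝ))) *
        (α + 1) ^ (-(∑ i ∈ Finset.range Lμ, μ i : ℤ)) *
        (α⁻¹ + 1) ^ (-(∑ i ∈ Finset.range Lν, ν i : ℤ)))) := by
  have hMR : Tendsto (fun t => (m t : ℝ)) atTop atTop := tendsto_natCast_atTop_atTop.comp hm
  have hNR : Tendsto (fun t => (n t : ℝ)) atTop atTop := hNR_aux hα hm hratio
  -- limits of the three product pieces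
  have hA : Tendsto (fun t => ∏ i ∈ Finset.range Lμ, ∏ s ∈ Finset.range (μ i),
      (((m t : ℝ) - i + s)/((m t : ℝ) + n t - i + s))) atTop
      (𝓝 (∏ i ∈ Finset.range Lμ, ∏ s ∈ Finset.range (μ i), (α+1)⁻¹)) := by
    refine tendsto_finset_prod _ fun i _ => tendsto_finset_prod _ fun s _ => ?_
    exact (lim_frac hα hm hratio ((s : ℝ) - i)).congr (fun t => by ring_nf)
  have hB : Tendsto (fun t => ∏ j ∈ Finset.range Lν, ∏ s ∈ Finset.range (ν j),
      (((n t : ℝ) - j + s)/((n t : ℝ) + m t - j + s))) atTop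
      (𝓝 (∏ j ∈ Finset.range Lν, ∏ s ∈ Finset.range (ν j), (α⁻¹+1)⁻¹)) := by
    refine tendsto_finset_prod _ fun j _ => tendsto_finset_prod _ fun s _ => ?_
    exact (lim_frac2 hα hm hratio ((s : ℝ) - j)).congr (fun t => by ring_nf)
  have hC : Tendsto (fun t => ∏ i ∈ Finset.range Lμ, ∏ j ∈ Finset.range Lν,
      ((((m t:ℝ) + n t - 1 - i - j + μ i)*((m t:ℝ) + n t - 1 - i - j + ν j)) /
        (((m t:ℝ) + n t - 1 - i - j)*((m t:ℝ) + n t - 1 - i - j + μ i + ν j)))) atTop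
      (𝓝 (∏ i ∈ Finset.range Lμ, ∏ j ∈ Finset.range Lν, (1:ℝ))) := by
    refine tendsto_finset_prod _ fun i _ => tendsto_finset_prod _ fun j _ => ?_
    have hCC : Tendsto (fun t => (m t : ℝ) + n t + (-1 - i - j)) atTop atTop :=
      tendsto_atTop_add_const_right _ _
        (tendsto_atTop_add_right_of_le _ 0 hMR (fun t => by positivity))
    have g1 : Tendsto (fun t => ((m t:ℝ) + n t - 1 - i - j + μ i) /
        ((m t:ℝ) + n t - 1 - i - j)) atTop (𝓝 1) :=
      (lim_one _ hCC (μ i) 0).congr (fun t => by ring_nf)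
    have g2 : Tendsto (fun t => ((m t:ℝ) + n t - 1 - i - j + ν j) /
        ((m t:ℝ) + n t - 1 - i - j + μ i + ν j)) atTop (𝓝 1) :=
      (lim_one _ hCC (ν j) ((μ i : ℝ) + ν j)).congr (fun t => by ring_nf)
    have := g1.mul g2
    rw [one_mul] at this
    exact this.congr (fun t => by rw [div_mul_div_comm])
  have hK : Tendsto (fun _ : ℕ => 1 / ((hookProd Lμ μ : ℝ) * (hookProd Lν ν : ℝ))) atTop
      (𝓝 (1 / ((hookProd Lμ μ : ℝ) * (hookProd Lν ν : ℝ)))) := tendsto_const_nhds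
  have hH := ((hK.mul hA).mul hB).mul hC
  -- compute the limit value
  have hval : (1 / ((hookProd Lμ μ : ℝ) * (hookProd Lν ν : ℝ)))
      * (∏ i ∈ Finset.range Lμ, ∏ s ∈ Finset.range (μ i), (α+1)⁻¹)
      * (∏ j ∈ Finset.range Lν, ∏ s ∈ Finset.range (ν j), (α⁻¹+1)⁻¹)
      * (∏ i ∈ Finset.range Lμ, ∏ j ∈ Finset.range Lν, (1:ℝ))
      = (1 / ((hookProd Lμ μ : ℝ) * (hookProd Lν ν : ℝ))) *
        (α + 1) ^ (-(∑ i ∈ Finset.range Lμ, μ i : ℤ)) *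
        (α⁻¹ + 1) ^ (-(∑ i ∈ Finset.range Lν, ν i : ℤ)) := by
    simp only [Finset.prod_const, Finset.card_range, Finset.prod_pow_eq_pow_sum, one_pow,
      Finset.prod_const_one, mul_one]
    congr 1
    · congr 1
      rw [zpow_neg]
      rw [show (∑ i ∈ Finset.range Lμ, μ i : ℤ) = ((∑ i ∈ Finset.range Lμ, μ i : ℕ) : ℤ) from
        by push_cast; rfl]
      rw [zpow_natCast, inv_pow]
    · rw [zpow_neg]
      rw [show (∑ i ∈ Finset.range Lν, ν i : ℤ) = ((∑ i ∈ Finset.range Lν, ν i : ℕ) : ℤ) from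
        by push_cast; rfl]
      rw [zpow_natCast, inv_pow]
  rw [hval] at hH
  refine Tendsto.congr' ?_ hH
  filter_upwards [hMR.eventually_ge_atTop (Lμ : ℝ), hNR.eventually_ge_atTop (Lν : ℝ)]
    with t h1 h2
  exact (ratio_eq hμ hμlen hν hνlen (m t) (n t)
    (by exact_mod_cast h1) (by exact_mod_cast h2)).symm
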